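/- Let X_1,...,X_n be independent random variables with X_i ∼ Bernoulli(p_i), and let ω_1,...,ω_n > 0 be weights. Suppose there is a constant c_1 ≥ 1 with (max_i ω_i) · Σ_i p_i ≤ c_1 · Σ_i ω_i p_i. Then for every t ≥ Σ_i ω_i p_i, P(Σ_i ω_i X_i ≥ t) ≤ ( e^{c_1} · Σ_i ω_i p_i / t )^{t / max_i ω_i}. -/

import Mathlib

open MeasureTheory ProbabilityTheory

/-- Concentration inequality for a weighted sum of independent Bernoulli random variables:
if `(max_i ω_i) ⬝ Σ p_i ≤ c₁ ⬝ Σ ω_i p_i` then for every `t ≥ Σ ω_i p_i`,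
`P(Σ ω_i X_i ≥ t) ≤ (e^{c₁} Σ ω_i p_i / t)^{t / max_i ω_i}`. -/
theorem weighted_bernoulli_tail {Ω : Type*} [MeasurableSpace Ω] (μ : Measure Ω)
    [IsProbabilityMeasure μ] (n : ℕ) (X : Fin n → Ω → ℝ) (p ω : Fin n → ℝ) (M c₁ t : ℝ)
    (hmeas : ∀ i, Measurable (X i))
    (hindep : iIndepFun X μ)
    (hval : ∀ i ζ, X i ζ = 0 ∨ X i ζ = 1)
    (hp : ∀ i, p i ∈ Set.Icc (0 : ℝ) 1)
    (hdist : ∀ i, μ {ζ | X i ζ = 1} = ENNReal.ofReal (p i))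
    (hω : ∀ i, 0 < ω i)
    (hM : IsGreatest (Set.range ω) M)
    (hc₁ : 1 ≤ c₁)
    (hbal : M * ∑ i, p i ≤ c₁ * ∑ i, ω i * p i)
    (ht : ∑ i, ω i * p i ≤ t) :
    μ {ζ | t ≤ ∑ i, ω i * X i ζ} ≤
      ENNReal.ofReal ((Real.exp c₁ * (∑ i, ω i * p i) / t) ^ (t / M)) := by
  classical
  set m : ℝ := ∑ i, ω i * p i with hm
  obtain ⟨i₀, hi₀⟩ := hM.1
  have hMpos : 0 < M := hi₀ ▸ hω i₀
  have hmnn : 0 ≤ m := Finset.sum_nonneg fun i _ => mul_nonneg (hω i).le (hp i).1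
  have htnn : 0 ≤ t := hmnn.trans ht
  rcases eq_or_lt_of_le htnn with htz | htpos
  · -- t = 0
    have h0 : t / M = 0 := by rw [← htz]; simp
    rw [h0, Real.rpow_zero, ENNReal.ofReal_one]
    exact prob_le_one
  rcases eq_or_lt_of_le hmnn with hmz | hmpos
  · -- m = 0 : all p_i = 0, so the event is null
    have hp0 : ∀ i, p i = 0 := by
      intro i
      have h := (Finset.sum_eq_zero_iff_of_nonneg
        (fun i _ => mul_nonneg (hω i).le (hp i).1)).mp hmz.symm i (Finset.mem_univ i)
      have := hω i
      nlinarith [(hp i).1]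
    have hsub : {ζ | t ≤ ∑ i, ω i * X i ζ} ⊆ ⋃ i, {ζ | X i ζ = 1} := by
      intro ζ hζ
      by_contra hC
      simp only [Set.mem_iUnion, Set.mem_setOf_eq, not_exists] at hC
      have hz : ∀ i, X i ζ = 0 := fun i => (hval i ζ).resolve_right (hC i)
      simp only [Set.mem_setOf_eq, hz, mul_zero, Finset.sum_const_zero] at hζ
      linarith
    have hnull : μ {ζ | t ≤ ∑ i, ω i * X i ζ} = 0 := by
      refine le_antisymm ?_ zero_le
      calc μ {ζ | t ≤ ∑ i, ω i * X i ζ} ≤ μ (⋃ i, {ζ | X i ζ = 1}) := measure_mono hsub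
        _ ≤ ∑ i, μ {ζ | X i ζ = 1} := measure_iUnion_fintype_le _ _
        _ = 0 := by simp [hdist, hp0]
    rw [hnull]; exact zero_le
  -- main case : 0 < m ≤ t
  have hr1 : (1 : ℝ) ≤ t / m := (one_le_div hmpos).mpr ht
  set l : ℝ := Real.log (t / m) / M with hl
  have hlnn : 0 ≤ l := div_nonneg (Real.log_nonneg hr1) hMpos.le
  have hlM : l * M = Real.log (t / m) := div_mul_cancel₀ _ hMpos.ne'
  have hexplM : Real.exp (l * M) = t / m := by
    rw [hlM, Real.exp_log (by positivity)]
  set Y : Fin n → Ω → ℝ := fun i ζ => ω i * X i ζ with hY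
  have hYmeas : ∀ i, Measurable (Y i) := fun i => (hmeas i).const_mul (ω i)
  have hYindep : iIndepFun Y μ :=
    hindep.comp (fun i x => ω i * x) (fun i => measurable_const_mul _)
  have key : ∀ i ζ, Real.exp (l * Y i ζ) = 1 + (Real.exp (l * ω i) - 1) * X i ζ := by
    intro i ζ
    rcases hval i ζ with h | h <;> simp [hY, h]
  have hXint : ∀ i, Integrable (X i) μ := by
    intro i
    refine (integrable_const (1 : ℝ)).mono' (hmeas i).aestronglyMeasurable
      (Filter.Eventually.of_forall fun ζ => ?_)
    rcases hval i ζ with h | h <;> simp [h]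
  have hEexp : ∀ i, Integrable (fun ζ => Real.exp (l * Y i ζ)) μ := by
    intro i
    have hfe : (fun ζ => Real.exp (l * Y i ζ))
        = fun ζ => 1 + (Real.exp (l * ω i) - 1) * X i ζ := funext (key i)
    rw [hfe]
    exact (integrable_const 1).add ((hXint i).const_mul _)
  have hEX : ∀ i, ∫ ζ, X i ζ ∂μ = p i := by
    intro i
    have hind : X i = Set.indicator {ζ | X i ζ = 1} (fun _ => (1 : ℝ)) := by
      funext ζ
      rcases hval i ζ with h | h <;> simp [Set.indicator, h]
    have hms : MeasurableSet {ζ | X i ζ = 1} := hmeas i (measurableSet_singleton 1)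
    rw [hind, integral_indicator_const _ hms, measureReal_def, hdist i,
      ENNReal.toReal_ofReal (hp i).1, smul_eq_mul, mul_one]
  have hmgf : ∀ i, mgf (Y i) μ l = 1 + p i * (Real.exp (l * ω i) - 1) := by
    intro i
    rw [mgf]
    have hfe : (fun ζ => Real.exp (l * Y i ζ))
        = fun ζ => 1 + (Real.exp (l * ω i) - 1) * X i ζ := funext (key i)
    calc ∫ ζ, Real.exp (l * Y i ζ) ∂μ
        = ∫ ζ, (1 + (Real.exp (l * ω i) - 1) * X i ζ) ∂μ := by rw [hfe]
      _ = ∫ _ζ, (1 : ℝ) ∂μ + ∫ ζ, (Real.exp (l * ω i) - 1) * X i ζ ∂μ :=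
          integral_add (integrable_const 1) ((hXint i).const_mul _)
      _ = 1 + (Real.exp (l * ω i) - 1) * p i := by
          rw [integral_const, integral_const_mul, hEX i]; simp
      _ = 1 + p i * (Real.exp (l * ω i) - 1) := by ring
  -- Chernoff bound
  have hset : {ζ | t ≤ ∑ i, ω i * X i ζ} = {ζ | t ≤ (∑ i, Y i) ζ} := by
    ext ζ; simp [hY]
  have hsumint : Integrable (fun ζ => Real.exp (l * (∑ i, Y i) ζ)) μ :=
    hYindep.integrable_exp_mul_sum hYmeas (fun i _ => hEexp i)
  have hchernoff := measure_ge_le_exp_mul_mgf (X := ∑ i, Y i) (μ := μ) t hlnn hsumint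
  rw [hYindep.mgf_sum hYmeas] at hchernoff
  -- bound the product of mgfs
  have hterm : ∀ i, p i * (Real.exp (l * ω i) - 1) ≤ p i * (ω i / M) * (Real.exp (l * M) - 1) := by
    intro i
    have hωM : ω i ≤ M := hM.2 ⟨i, rfl⟩
    set s : ℝ := ω i / M with hs
    have hs0 : 0 ≤ s := div_nonneg (hω i).le hMpos.le
    have hs1 : s ≤ 1 := (div_le_one hMpos).mpr hωM
    have hexp1 : Real.exp (l * ω i) ≤ 1 + s * (Real.exp (l * M) - 1) := by
      have hrw : l * ω i = l * M * s := by
        rw [hs, mul_assoc, mul_div_assoc', mul_comm M (ω i), mul_div_assoc, div_self hMpos.ne', mul_one]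
      have hgm := Real.geom_mean_le_arith_mean2_weighted (by linarith : (0:ℝ) ≤ 1 - s) hs0
        zero_le_one (Real.exp_nonneg (l * M)) (by ring)
      have hpow : (1 : ℝ) ^ (1 - s) * Real.exp (l * M) ^ s = Real.exp (l * ω i) := by
        rw [Real.one_rpow, one_mul, ← Real.exp_mul, ← hrw]
      rw [hpow] at hgm
      nlinarith
    have := (hp i).1
    nlinarith [Real.add_one_le_exp (l * ω i)]
  have hprod : ∏ i, mgf (Y i) μ l ≤ Real.exp ((Real.exp (l * M) - 1) / M * m) := by
    have h1 : ∏ i, mgf (Y i) μ l ≤ ∏ i, Real.exp (p i * (ω i / M) * (Real.exp (l * M) - 1)) := by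
      refine Finset.prod_le_prod (fun i _ => ?_) (fun i _ => ?_)
      · rw [hmgf i]
        have h2 : 1 ≤ Real.exp (l * ω i) :=
          Real.one_le_exp (mul_nonneg hlnn (hω i).le)
        nlinarith [(hp i).1]
      · rw [hmgf i]
        calc 1 + p i * (Real.exp (l * ω i) - 1)
            ≤ 1 + p i * (ω i / M) * (Real.exp (l * M) - 1) := by
              have := hterm i; linarith
          _ ≤ Real.exp (p i * (ω i / M) * (Real.exp (l * M) - 1)) := by
              have := Real.add_one_le_exp (p i * (ω i / M) * (Real.exp (l * M) - 1))
              linarith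
    rw [← Real.exp_sum] at h1
    refine h1.trans (Real.exp_le_exp.mpr (le_of_eq ?_))
    rw [hm, Finset.mul_sum]
    refine Finset.sum_congr rfl fun i _ => ?_
    field_simp
  have hE1 : Real.exp (l * M) - 1 = t / m - 1 := by rw [hexplM]
  have hexpbound : ((Real.exp (l * M) - 1) / M * m) = (t - m) / M := by
    rw [hE1]; field_simp
  -- putting it together on the real side
  have hreal : (μ {ζ | t ≤ (∑ i, Y i) ζ}).toReal
      ≤ (Real.exp c₁ * m / t) ^ (t / M) := by
    have hbase : 0 < Real.exp c₁ * m / t := by positivity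
    have hlogbase : Real.log (Real.exp c₁ * m / t) = c₁ - Real.log (t / m) := by
      rw [Real.log_div (by positivity) htpos.ne', Real.log_mul (Real.exp_ne_zero _) hmpos.ne',
        Real.log_exp, Real.log_div htpos.ne' hmpos.ne']
      ring
    have hrhs : (Real.exp c₁ * m / t) ^ (t / M)
        = Real.exp ((c₁ - Real.log (t / m)) * (t / M)) := by
      rw [Real.rpow_def_of_pos hbase, hlogbase]
    rw [hrhs]
    calc (μ {ζ | t ≤ (∑ i, Y i) ζ}).toReal
        ≤ Real.exp (-l * t) * ∏ i, mgf (Y i) μ l := hchernoff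
      _ ≤ Real.exp (-l * t) * Real.exp ((Real.exp (l * M) - 1) / M * m) := by
          exact mul_le_mul_of_nonneg_left hprod (Real.exp_nonneg _)
      _ = Real.exp (-l * t + (t - m) / M) := by rw [← Real.exp_add, hexpbound]
      _ ≤ Real.exp ((c₁ - Real.log (t / m)) * (t / M)) := by
          rw [Real.exp_le_exp]
          have hlt : l * t = Real.log (t / m) * (t / M) := by
            rw [hl]; field_simp
          have h1 : (t - m) / M ≤ c₁ * (t / M) := by
            rw [div_le_iff₀ hMpos]
            have : c₁ * (t / M) * M = c₁ * t := by field_simp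
            rw [this]
            nlinarith
          nlinarith
  rw [hset, ← ENNReal.ofReal_toReal (measure_ne_top μ _)]
  exact ENNReal.ofReal_le_ofReal hreal
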